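/- arXiv:2302.08529 — 2 statements merged into one kernel-verified Lean document; each statement's English description precedes it below -/
import Mathlib

section
/- Quantum speed limit of gradients: Let H_R, H^{(m)}, H_L, O be Hermitian matrices, ρ₀ a density matrix, and define A(t₁,t₂) = i·Tr(e^{−iH_R t₁} ρ₀ e^{iH_R t₁} [H^{(m)}, e^{iH_L t₂} O e^{−iH_L t₂}]). Set K = max(‖H_R‖, ‖H^{(m)}‖) and C = max(‖[H^{(m)},O]‖, ‖[H_L,O]‖), and assume A(0,0) ≠ 0 and K, C > 0. Then for all t_R, t_L ≥ 0 with t_R + t_L ≤ |A(0,0)|/(4KC), we have |A(t_R, t_L)| ≥ |A(0,0)|/2. -/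
open Matrix NormedSpace
open scoped Matrix.Norms.L2Operator ComplexOrder

namespace QSLAux

variable {n : ℕ}

lemma entry_le_norm (B : Matrix (Fin n) (Fin n) ℂ) (i j : Fin n) : ‖B i j‖ ≤ ‖B‖ := by
  have h := B.l2_opNorm_mulVec (EuclideanSpace.single j 1)
  rw [EuclideanSpace.norm_single, norm_one, mul_one] at h
  refine le_trans ?_ h
  set v : EuclideanSpace ℂ (Fin n) :=
    (EuclideanSpace.equiv (Fin n) ℂ).symm (B *ᵥ (EuclideanSpace.single j 1)) with hv
  have hvi : v i = B i j := by
    show (B *ᵥ (EuclideanSpace.single j 1)) i = B i j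
    simp [Matrix.mulVec, dotProduct, EuclideanSpace.single_apply]
  calc ‖B i j‖ = Real.sqrt (‖v i‖ ^ 2) := by rw [hvi, Real.sqrt_sq (norm_nonneg _)]
    _ ≤ Real.sqrt (∑ k, ‖v k‖ ^ 2) :=
        Real.sqrt_le_sqrt (Finset.single_le_sum (fun k _ => sq_nonneg ‖v k‖) (Finset.mem_univ i))
    _ = ‖v‖ := (EuclideanSpace.norm_eq v).symm

lemma trace_mul_le {ρ : Matrix (Fin n) (Fin n) ℂ} (hρ : ρ.PosSemidef) (htr : ρ.trace = 1)
    (M : Matrix (Fin n) (Fin n) ℂ) : ‖(ρ * M).trace‖ ≤ ‖M‖ := by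
  have hH : ρ.IsHermitian := hρ.1
  have hco : ∀ x : ℝ, (RCLike.ofReal x : ℂ) = (x : ℂ) := fun x => rfl
  set U : Matrix (Fin n) (Fin n) ℂ := (hH.eigenvectorUnitary : Matrix (Fin n) (Fin n) ℂ) with hU
  set lam : Fin n → ℝ := hH.eigenvalues with hlam
  set D : Matrix (Fin n) (Fin n) ℂ := Matrix.diagonal (RCLike.ofReal ∘ lam) with hD
  have hspec : ρ = U * D * star U := hH.spectral_theorem
  have hUU : star U * U = 1 := Unitary.coe_star_mul_self hH.eigenvectorUnitary
  set B : Matrix (Fin n) (Fin n) ℂ := star U * M * U with hB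
  have htr1 : (ρ * M).trace = (D * B).trace := by
    rw [hspec, hB]
    rw [show U * D * star U * M = U * (D * (star U * M)) by noncomm_ring,
      Matrix.trace_mul_comm]
    congr 1
    noncomm_ring
  have hDB : (D * B).trace = ∑ i, (lam i : ℂ) * B i i := by
    rw [hD]
    simp only [Matrix.trace, Matrix.diag, Matrix.diagonal_mul, Function.comp, hco]
  have hsum : ∑ i, lam i = 1 := by
    have h1 : ρ.trace = (D).trace := by
      rw [hspec, Matrix.trace_mul_cycle, hUU, Matrix.one_mul]
    have h2 : ((∑ i, lam i : ℝ) : ℂ) = 1 := by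
      rw [← htr, h1, hD, Matrix.trace_diagonal]
      simp only [Function.comp, hco]
      push_cast
      rfl
    exact_mod_cast h2
  have hBnorm : ‖B‖ = ‖M‖ := by
    rw [hB, CStarRing.norm_mul_mem_unitary _ hH.eigenvectorUnitary.2,
      CStarRing.norm_mem_unitary_mul _ (Unitary.star_mem hH.eigenvectorUnitary.2)]
  rw [htr1, hDB]
  calc ‖∑ i, (lam i : ℂ) * B i i‖ ≤ ∑ i, ‖(lam i : ℂ) * B i i‖ := norm_sum_le _ _
    _ ≤ ∑ i, lam i * ‖M‖ := by
        refine Finset.sum_le_sum fun i _ => ?_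
        rw [norm_mul, Complex.norm_real, Real.norm_of_nonneg (hρ.eigenvalues_nonneg i)]
        exact mul_le_mul_of_nonneg_left (le_trans (entry_le_norm B i i) hBnorm.le)
          (hρ.eigenvalues_nonneg i)
    _ = (∑ i, lam i) * ‖M‖ := by rw [Finset.sum_mul]
    _ = ‖M‖ := by rw [hsum, one_mul]

lemma conj_sub_le (H X : Matrix (Fin n) (Fin n) ℂ) (hH : H.IsHermitian) (t : ℝ) (ht : 0 ≤ t) :
    ‖exp ((Complex.I * (t : ℂ)) • H) * X * exp ((-(Complex.I * (t : ℂ))) • H) - X‖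
      ≤ t * ‖H * X - X * H‖ := by
  set Y : Matrix (Fin n) (Fin n) ℂ := Complex.I • H with hY
  have key : ∀ s : ℝ, (Complex.I * (s : ℂ)) • H = (s : ℂ) • Y := by
    intro s; rw [hY, smul_smul, mul_comm]
  have key' : ∀ s : ℝ, (-(Complex.I * (s : ℂ))) • H = (s : ℂ) • (-Y) := by
    intro s; rw [neg_smul, key, smul_neg]
  have hskew : ∀ s : ℝ, ((s : ℂ) • Y) ∈ skewAdjoint (Matrix (Fin n) (Fin n) ℂ) := by
    intro s
    rw [skewAdjoint.mem_iff, hY, smul_smul, star_smul, Matrix.star_eq_conjTranspose, hH.eq,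
      ← neg_smul]
    congr 1
    simp [Complex.conj_I, mul_comm]
  have hmemE : ∀ s : ℝ, exp ((s : ℂ) • Y) ∈ unitary (Matrix (Fin n) (Fin n) ℂ) :=
    fun s => by
      rw [Unitary.mem_iff, star_exp, skewAdjoint.mem_iff.mp (hskew s),
        ← Matrix.exp_add_of_commute (-((s : ℂ) • Y)) ((s : ℂ) • Y) (Commute.refl _).neg_left,
        ← Matrix.exp_add_of_commute ((s : ℂ) • Y) (-((s : ℂ) • Y)) (Commute.refl _).neg_right,
        neg_add_cancel,
        add_neg_cancel, exp_zero]
      exact ⟨rfl, rfl⟩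
  have hstarE : ∀ s : ℝ, star (exp ((s : ℂ) • Y)) = exp ((s : ℂ) • (-Y)) := by
    intro s
    rw [star_exp, skewAdjoint.mem_iff.mp (hskew s), smul_neg]
  have hmemF : ∀ s : ℝ, exp ((s : ℂ) • (-Y)) ∈ unitary (Matrix (Fin n) (Fin n) ℂ) := by
    intro s
    rw [← hstarE s]
    exact Unitary.star_mem (hmemE s)
  set Z : Matrix (Fin n) (Fin n) ℂ := Y * X - X * Y with hZ
  have hderiv : ∀ s : ℝ, HasDerivAt
      (fun u : ℝ => exp ((u : ℂ) • Y) * X * exp ((u : ℂ) • (-Y)))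
      (exp ((s : ℂ) • Y) * Z * exp ((s : ℂ) • (-Y))) s := by
    intro s
    have hco : HasDerivAt (fun u : ℝ => (u : ℂ)) 1 s := by
      simpa using (hasDerivAt_id s).ofReal_comp
    have h1 : HasDerivAt (fun u : ℝ => exp ((u : ℂ) • Y)) (exp ((s : ℂ) • Y) * Y) s := by
      simpa [Function.comp_def] using
        HasDerivAt.scomp s (hasDerivAt_exp_smul_const (𝕂 := ℂ) Y (s : ℂ)) hco
    have h2 : HasDerivAt (fun u : ℝ => exp ((u : ℂ) • (-Y)))
        (exp ((s : ℂ) • (-Y)) * (-Y)) s := by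
      simpa [Function.comp_def] using
        HasDerivAt.scomp s (hasDerivAt_exp_smul_const (𝕂 := ℂ) (-Y) (s : ℂ)) hco
    have h3 := (h1.mul_const X).mul h2
    refine h3.congr_deriv (Eq.symm ?_)
    have hc : exp ((s : ℂ) • (-Y)) * Y = Y * exp ((s : ℂ) • (-Y)) := by
      have hcm : Commute Y ((s : ℂ) • (-Y)) := ((Commute.refl Y).neg_right).smul_right _
      exact ((hcm.exp_right).eq).symm
    rw [hZ]
    rw [mul_sub, sub_mul]
    rw [show exp ((s:ℂ) • Y) * X * (exp ((s:ℂ) • (-Y)) * (-Y))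
        = -(exp ((s:ℂ) • Y) * (X * Y) * exp ((s:ℂ) • (-Y))) by
      rw [mul_neg, hc]; noncomm_ring]
    noncomm_ring
  have hZnorm : ‖Z‖ = ‖H * X - X * H‖ := by
    rw [hZ, hY, smul_mul_assoc, mul_smul_comm, ← smul_sub, norm_smul, Complex.norm_I, one_mul]
  have hbound : ∀ s : ℝ, ‖exp ((s : ℂ) • Y) * Z * exp ((s : ℂ) • (-Y))‖
      = ‖H * X - X * H‖ := by
    intro s
    rw [CStarRing.norm_mul_mem_unitary _ (hmemF s), CStarRing.norm_mem_unitary_mul _ (hmemE s),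
      hZnorm]
  have hmvt := Convex.norm_image_sub_le_of_norm_hasDerivWithin_le
    (f := fun u : ℝ => exp ((u : ℂ) • Y) * X * exp ((u : ℂ) • (-Y)))
    (f' := fun s : ℝ => exp ((s : ℂ) • Y) * Z * exp ((s : ℂ) • (-Y)))
    (s := (Set.univ : Set ℝ)) (C := ‖H * X - X * H‖)
    (fun x _ => (hderiv x).hasDerivWithinAt)
    (fun x _ => (hbound x).le) convex_univ (Set.mem_univ 0) (Set.mem_univ t)
  have h0 : exp (((0:ℝ) : ℂ) • Y) * X * exp (((0:ℝ) : ℂ) • (-Y)) = X := by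
    simp [exp_zero]
  simp only [h0, sub_zero, Real.norm_of_nonneg ht] at hmvt
  calc ‖exp ((Complex.I * (t : ℂ)) • H) * X * exp ((-(Complex.I * (t : ℂ))) • H) - X‖
      = ‖exp ((t : ℂ) • Y) * X * exp ((t : ℂ) • (-Y)) - X‖ := by rw [key, key']
    _ ≤ ‖H * X - X * H‖ * t := hmvt
    _ = t * ‖H * X - X * H‖ := mul_comm _ _

end QSLAux

open QSLAux

theorem quantum_speed_limit_of_gradients (n : ℕ) (HR Hm HL O ρ₀ : Matrix (Fin n) (Fin n) ℂ)
    (hHR : HR.IsHermitian) (hHm : Hm.IsHermitian) (hHL : HL.IsHermitian)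
    (hO : O.IsHermitian) (hρ : ρ₀.PosSemidef) (hρtr : ρ₀.trace = 1)
    (A : ℝ → ℝ → ℂ)
    (hA : A = fun (t₁ t₂ : ℝ) =>
      Complex.I *
        (exp ((-(Complex.I * (t₁ : ℂ))) • HR) * ρ₀ * exp ((Complex.I * (t₁ : ℂ)) • HR) *
          (Hm * (exp ((Complex.I * (t₂ : ℂ)) • HL) * O * exp ((-(Complex.I * (t₂ : ℂ))) • HL))
            - (exp ((Complex.I * (t₂ : ℂ)) • HL) * O *
                exp ((-(Complex.I * (t₂ : ℂ))) • HL)) * Hm)).trace)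
    (K C : ℝ) (hK : K = max ‖HR‖ ‖Hm‖) (hC : C = max ‖Hm * O - O * Hm‖ ‖HL * O - O * HL‖)
    (hA0 : A 0 0 ≠ 0) (hKpos : 0 < K) (hCpos : 0 < C) :
    ∀ tR tL : ℝ, 0 ≤ tR → 0 ≤ tL → tR + tL ≤ ‖A 0 0‖ / (4 * K * C) →
      ‖A tR tL‖ ≥ ‖A 0 0‖ / 2 := by
  intro tR tL htR htL hsum
  -- abbreviations
  set E₁ : ℝ → Matrix (Fin n) (Fin n) ℂ := fun t => exp ((-(Complex.I * (t : ℂ))) • HR) with hE₁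
  set E₂ : ℝ → Matrix (Fin n) (Fin n) ℂ := fun t => exp ((Complex.I * (t : ℂ)) • HR) with hE₂
  set Ot : ℝ → Matrix (Fin n) (Fin n) ℂ := fun t =>
    exp ((Complex.I * (t : ℂ)) • HL) * O * exp ((-(Complex.I * (t : ℂ))) • HL) with hOt
  set Com : ℝ → Matrix (Fin n) (Fin n) ℂ := fun t => Hm * Ot t - Ot t * Hm with hCom
  have hAeq : ∀ t₁ t₂ : ℝ, A t₁ t₂ = Complex.I * ((E₁ t₁ * ρ₀ * E₂ t₁) * Com t₂).trace := by
    intro t₁ t₂; rw [hA]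
  have hOt0 : Ot 0 = O := by
    simp only [hOt]
    simp [exp_zero]
  have hCom0 : Com 0 = Hm * O - O * Hm := by simp only [hCom]; rw [hOt0]
  -- unitarity facts for E
  have hE21 : ∀ t : ℝ, E₂ t * E₁ t = 1 := by
    intro t
    show exp ((Complex.I * (t : ℂ)) • HR) * exp ((-(Complex.I * (t : ℂ))) • HR) = 1
    rw [neg_smul, ← Matrix.exp_add_of_commute ((Complex.I * (t : ℂ)) • HR) (-((Complex.I * (t : ℂ)) • HR))
      ((Commute.refl _).neg_right), add_neg_cancel, exp_zero]
  have hstarE₁ : ∀ t : ℝ, star (E₁ t) = E₂ t := by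
    intro t
    show star (exp ((-(Complex.I * (t : ℂ))) • HR)) = exp ((Complex.I * (t : ℂ)) • HR)
    rw [star_exp]
    congr 1
    rw [star_smul, Matrix.star_eq_conjTranspose, hHR.eq]
    congr 1
    simp [Complex.conj_I]
  -- ρ(t) properties
  have hρt_psd : ∀ t : ℝ, (E₁ t * ρ₀ * E₂ t).PosSemidef := by
    intro t
    have := hρ.mul_mul_conjTranspose_same (E₁ t)
    rwa [show (E₁ t)ᴴ = E₂ t from by rw [← Matrix.star_eq_conjTranspose, hstarE₁ t]] at this
  have hρt_tr : ∀ t : ℝ, (E₁ t * ρ₀ * E₂ t).trace = 1 := by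
    intro t
    rw [Matrix.trace_mul_cycle, hE21 t, Matrix.one_mul, hρtr]
  -- norms
  have hHmK : ‖Hm‖ ≤ K := by rw [hK]; exact le_max_right _ _
  have hHRK : ‖HR‖ ≤ K := by rw [hK]; exact le_max_left _ _
  have hComC : ‖Hm * O - O * Hm‖ ≤ C := by rw [hC]; exact le_max_left _ _
  have hHLC : ‖HL * O - O * HL‖ ≤ C := by rw [hC]; exact le_max_right _ _
  -- Step 1 : ‖A tR tL - A tR 0‖ ≤ 2*K*C*tL
  have step1 : ‖A tR tL - A tR 0‖ ≤ 2 * K * C * tL := by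
    have hdiff : A tR tL - A tR 0
        = Complex.I * ((E₁ tR * ρ₀ * E₂ tR) * (Com tL - Com 0)).trace := by
      rw [hAeq, hAeq, ← mul_sub, ← Matrix.trace_sub, ← Matrix.mul_sub]
    have hΔ : ‖Com tL - Com 0‖ ≤ 2 * K * (tL * C) := by
      have hOΔ : ‖Ot tL - O‖ ≤ tL * ‖HL * O - O * HL‖ :=
        conj_sub_le HL O hHL tL htL
      have hre : Com tL - Com 0 = Hm * (Ot tL - O) - (Ot tL - O) * Hm := by
        simp only [hCom]
        rw [hOt0]
        noncomm_ring
      rw [hre]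
      calc ‖Hm * (Ot tL - O) - (Ot tL - O) * Hm‖
          ≤ ‖Hm * (Ot tL - O)‖ + ‖(Ot tL - O) * Hm‖ := norm_sub_le _ _
        _ ≤ ‖Hm‖ * ‖Ot tL - O‖ + ‖Ot tL - O‖ * ‖Hm‖ :=
            add_le_add (Matrix.l2_opNorm_mul _ _) (Matrix.l2_opNorm_mul _ _)
        _ = 2 * (‖Hm‖ * ‖Ot tL - O‖) := by ring
        _ ≤ 2 * (K * (tL * C)) := by
            refine mul_le_mul_of_nonneg_left ?_ (by norm_num)
            refine mul_le_mul hHmK (le_trans hOΔ ?_) (norm_nonneg _) (le_of_lt hKpos)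
            exact mul_le_mul_of_nonneg_left hHLC htL
        _ = 2 * K * (tL * C) := by ring
    calc ‖A tR tL - A tR 0‖
        = ‖((E₁ tR * ρ₀ * E₂ tR) * (Com tL - Com 0)).trace‖ := by
          rw [hdiff, norm_mul, Complex.norm_I, one_mul]
      _ ≤ ‖Com tL - Com 0‖ := trace_mul_le (hρt_psd tR) (hρt_tr tR) _
      _ ≤ 2 * K * (tL * C) := hΔ
      _ = 2 * K * C * tL := by ring
  -- Step 2 : ‖A tR 0 - A 0 0‖ ≤ 2*K*C*tR
  have step2 : ‖A tR 0 - A 0 0‖ ≤ 2 * K * C * tR := by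
    set Com0 : Matrix (Fin n) (Fin n) ℂ := Hm * O - O * Hm with hCom0'
    have hcyc : ∀ t : ℝ, ((E₁ t * ρ₀ * E₂ t) * Com0).trace
        = (ρ₀ * (E₂ t * Com0 * E₁ t)).trace := by
      intro t
      rw [show E₁ t * ρ₀ * E₂ t * Com0 = E₁ t * (ρ₀ * (E₂ t * Com0)) by noncomm_ring,
        Matrix.trace_mul_comm,
        show ρ₀ * (E₂ t * Com0) * E₁ t = ρ₀ * (E₂ t * Com0 * E₁ t) by noncomm_ring]
    have hE00 : E₁ (0:ℝ) * ρ₀ * E₂ (0:ℝ) = ρ₀ := by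
      simp only [hE₁, hE₂]
      simp [exp_zero]
    have hdiff : A tR 0 - A 0 0
        = Complex.I * (ρ₀ * (E₂ tR * Com0 * E₁ tR - Com0)).trace := by
      rw [hAeq, hAeq, hCom0, hcyc tR, hE00, ← mul_sub, ← Matrix.trace_sub, ← Matrix.mul_sub]
    have hΔ : ‖E₂ tR * Com0 * E₁ tR - Com0‖ ≤ tR * (2 * (K * C)) := by
      have h : ‖E₂ tR * Com0 * E₁ tR - Com0‖ ≤ tR * ‖HR * Com0 - Com0 * HR‖ :=
        conj_sub_le HR Com0 hHR tR htR
      refine le_trans h (mul_le_mul_of_nonneg_left ?_ htR)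
      calc ‖HR * Com0 - Com0 * HR‖ ≤ ‖HR * Com0‖ + ‖Com0 * HR‖ := norm_sub_le _ _
        _ ≤ ‖HR‖ * ‖Com0‖ + ‖Com0‖ * ‖HR‖ :=
            add_le_add (Matrix.l2_opNorm_mul _ _) (Matrix.l2_opNorm_mul _ _)
        _ = 2 * (‖HR‖ * ‖Com0‖) := by ring
        _ ≤ 2 * (K * C) := by
            refine mul_le_mul_of_nonneg_left ?_ (by norm_num)
            exact mul_le_mul hHRK hComC (norm_nonneg _) (le_of_lt hKpos)
    calc ‖A tR 0 - A 0 0‖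
        = ‖(ρ₀ * (E₂ tR * Com0 * E₁ tR - Com0)).trace‖ := by
          rw [hdiff, norm_mul, Complex.norm_I, one_mul]
      _ ≤ ‖E₂ tR * Com0 * E₁ tR - Com0‖ := trace_mul_le hρ hρtr _
      _ ≤ tR * (2 * (K * C)) := hΔ
      _ = 2 * K * C * tR := by ring
  -- combine
  have htotal : ‖A tR tL - A 0 0‖ ≤ ‖A 0 0‖ / 2 := by
    have h1 : ‖A tR tL - A 0 0‖ ≤ 2 * K * C * (tR + tL) := by
      calc ‖A tR tL - A 0 0‖ ≤ ‖A tR tL - A tR 0‖ + ‖A tR 0 - A 0 0‖ :=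
            norm_sub_le_norm_sub_add_norm_sub _ _ _
        _ ≤ 2 * K * C * tL + 2 * K * C * tR := add_le_add step1 step2
        _ = 2 * K * C * (tR + tL) := by ring
    have hKC : (0:ℝ) < 2 * K * C := by positivity
    calc ‖A tR tL - A 0 0‖ ≤ 2 * K * C * (tR + tL) := h1
      _ ≤ 2 * K * C * (‖A 0 0‖ / (4 * K * C)) := mul_le_mul_of_nonneg_left hsum hKC.le
      _ = ‖A 0 0‖ / 2 := by field_simp; ring
  have := norm_sub_norm_le (A tR tL) (A 0 0)
  have h2 : ‖A 0 0‖ - ‖A tR tL‖ ≤ ‖A 0 0‖ / 2 := by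
    calc ‖A 0 0‖ - ‖A tR tL‖ ≤ ‖A 0 0 - A tR tL‖ := by
          have := norm_sub_norm_le (A 0 0) (A tR tL); linarith [this]
      _ = ‖A tR tL - A 0 0‖ := norm_sub_rev _ _
      _ ≤ ‖A 0 0‖ / 2 := htotal
  linarith
end

section
/- Multicommutator bound: Let H^{(i₁)}, …, H^{(iₙ)} be Hamiltonians, each of the form H^{(j)} = ∑_X h_X^{(j)} over subsets X of a site set Λ, with the local bound ∑_{X : X ∋ a} ‖h_X^{(j)}‖ ≤ J for all sites a and all j, and with each h_X^{(j)} supported on at most k sites. Then for any operator O supported on at most k sites, ‖[H^{(iₙ)}, [H^{(iₙ₋₁)}, …, [H^{(i₁)}, O]…]]‖ ≤ n! · (2kJ)^n · ‖O‖. -/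
open Matrix
open scoped Matrix.Norms.L2Operator

variable {Λ : Type*} [Fintype Λ] [DecidableEq Λ]

/-- An operator on a system of qubits indexed by `Λ` is supported on the set of sites `X`
if it acts trivially (as the identity) outside of `X`. -/
def SupportedOn (X : Finset Λ) (M : Matrix (Λ → Fin 2) (Λ → Fin 2) ℂ) : Prop :=
  (∀ f g : Λ → Fin 2, (∃ a ∉ X, f a ≠ g a) → M f g = 0) ∧
  (∀ f g f' g' : Λ → Fin 2, (∀ a ∈ X, f a = f' a) → (∀ a ∈ X, g a = g' a) →
    (∀ a ∉ X, f a = g a) → (∀ a ∉ X, f' a = g' a) → M f g = M f' g')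

/-- `H` is a `k`-body Hamiltonian with local interaction strength at most `J`:
it decomposes as a sum of terms `h_X` supported on subsets `X` of at most `k` sites,
with `∑_{X ∋ a} ‖h_X‖ ≤ J` for every site `a`. -/
def IsLocalHamiltonian (k : ℕ) (J : ℝ) (H : Matrix (Λ → Fin 2) (Λ → Fin 2) ℂ) : Prop :=
  ∃ h : Finset Λ → Matrix (Λ → Fin 2) (Λ → Fin 2) ℂ,
    H = ∑ X : Finset Λ, h X ∧
    (∀ X : Finset Λ, SupportedOn X (h X)) ∧
    (∀ X : Finset Λ, k < X.card → h X = 0) ∧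
    (∀ a : Λ, ∑ X ∈ Finset.univ.filter (fun X : Finset Λ => a ∈ X), ‖h X‖ ≤ J)

/-- The nested commutator `[Aₙ, [Aₙ₋₁, …, [A₁, O]…]]` for a list `[Aₙ, …, A₁]`. -/
def nestedComm {α : Type*} [Ring α] : List α → α → α
  | [], O => O
  | (A :: l), O => A * nestedComm l O - nestedComm l O * A

lemma SupportedOn.sub {X : Finset Λ} {A B : Matrix (Λ → Fin 2) (Λ → Fin 2) ℂ}
    (hA : SupportedOn X A) (hB : SupportedOn X B) : SupportedOn X (A - B) := by
  refine ⟨fun f g h => ?_, fun f g f' g' h1 h2 h3 h4 => ?_⟩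
  · simp [Matrix.sub_apply, hA.1 f g h, hB.1 f g h]
  · simp [Matrix.sub_apply, hA.2 f g f' g' h1 h2 h3 h4, hB.2 f g f' g' h1 h2 h3 h4]

lemma SupportedOn.mono {X Y : Finset Λ} {M : Matrix (Λ → Fin 2) (Λ → Fin 2) ℂ}
    (hM : SupportedOn X M) (hXY : X ⊆ Y) : SupportedOn Y M := by
  refine ⟨fun f g ⟨a, ha, hfg⟩ => hM.1 f g ⟨a, fun h => ha (hXY h), hfg⟩,
    fun f g f' g' h1 h2 h3 h4 => ?_⟩
  by_cases hc : ∀ a ∉ X, f a = g a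
  · have hc' : ∀ a ∉ X, f' a = g' a := by
      intro a ha
      by_cases haY : a ∈ Y
      · rw [← h1 a haY, ← h2 a haY]; exact hc a ha
      · exact h4 a haY
    exact hM.2 f g f' g' (fun a ha => h1 a (hXY ha)) (fun a ha => h2 a (hXY ha)) hc hc'
  · push_neg at hc
    obtain ⟨a, haX, hfg⟩ := hc
    have haY : a ∈ Y := by
      by_contra haY
      exact hfg (h3 a haY)
    rw [hM.1 f g ⟨a, haX, hfg⟩, hM.1 f' g' ⟨a, haX, ?_⟩]
    rw [← h1 a haY, ← h2 a haY]; exact hfg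

lemma SupportedOn.mul {X Y : Finset Λ} {A B : Matrix (Λ → Fin 2) (Λ → Fin 2) ℂ}
    (hA : SupportedOn X A) (hB : SupportedOn Y B) : SupportedOn (X ∪ Y) (A * B) := by
  constructor
  · rintro f g ⟨a, ha, hfg⟩
    rw [Matrix.mul_apply]
    refine Finset.sum_eq_zero fun h _ => ?_
    by_cases hha : h a = f a
    · rw [hB.1 h g ⟨a, fun hmem => ha (Finset.mem_union_right _ hmem), by rw [hha]; exact hfg⟩,
        mul_zero]
    · rw [hA.1 f h ⟨a, fun hmem => ha (Finset.mem_union_left _ hmem), fun e => hha e.symm⟩,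
        zero_mul]
  · intro f g f' g' h1 h2 h3 h4
    rw [Matrix.mul_apply, Matrix.mul_apply]
    set T : Finset (Λ → Fin 2) := Finset.univ.filter (fun h => ∀ a ∉ X, h a = f a) with hT
    set T' : Finset (Λ → Fin 2) := Finset.univ.filter (fun h => ∀ a ∉ X, h a = f' a) with hT'
    have e1 : ∑ j : Λ → Fin 2, A f j * B j g = ∑ j ∈ T, A f j * B j g := by
      refine (Finset.sum_subset (Finset.subset_univ T) fun h _ hh => ?_).symm
      simp only [hT, Finset.mem_filter, Finset.mem_univ, true_and] at hh
      push_neg at hh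
      obtain ⟨a, haX, hne⟩ := hh
      rw [hA.1 f h ⟨a, haX, fun e => hne e.symm⟩, zero_mul]
    have e2 : ∑ j : Λ → Fin 2, A f' j * B j g' = ∑ j ∈ T', A f' j * B j g' := by
      refine (Finset.sum_subset (Finset.subset_univ T') fun h _ hh => ?_).symm
      simp only [hT', Finset.mem_filter, Finset.mem_univ, true_and] at hh
      push_neg at hh
      obtain ⟨a, haX, hne⟩ := hh
      rw [hA.1 f' h ⟨a, haX, fun e => hne e.symm⟩, zero_mul]
    rw [e1, e2]
    refine Finset.sum_bij' (fun h _ => fun a => if a ∈ X then h a else f' a)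
      (fun h _ => fun a => if a ∈ X then h a else f a) ?_ ?_ ?_ ?_ ?_
    · intro h hh
      simp only [hT', Finset.mem_filter, Finset.mem_univ, true_and]
      intro a ha; rw [if_neg ha]
    · intro h hh
      simp only [hT, Finset.mem_filter, Finset.mem_univ, true_and]
      intro a ha; rw [if_neg ha]
    · intro h hh
      simp only [hT, Finset.mem_filter, Finset.mem_univ, true_and] at hh
      funext a
      by_cases ha : a ∈ X
      · simp [ha]
      · simp [ha, hh a ha]
    · intro h hh
      simp only [hT', Finset.mem_filter, Finset.mem_univ, true_and] at hh
      funext a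
      by_cases ha : a ∈ X
      · simp [ha]
      · simp [ha, hh a ha]
    · intro h hh
      simp only [hT, Finset.mem_filter, Finset.mem_univ, true_and] at hh
      have hAeq : A f h = A f' (fun a => if a ∈ X then h a else f' a) := by
        refine hA.2 f h f' _ (fun a ha => h1 a (Finset.mem_union_left _ ha))
          (fun a ha => (if_pos ha).symm) (fun a ha => (hh a ha).symm) (fun a ha => (if_neg ha).symm)
      have hBeq : B h g = B (fun a => if a ∈ X then h a else f' a) g' := by
        by_cases hcase : ∀ a ∉ Y, h a = g a
        · refine hB.2 h g _ g' (fun a ha => ?_) (fun a ha => h2 a (Finset.mem_union_right _ ha))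
            hcase (fun a ha => ?_)
          · by_cases haX : a ∈ X
            · rw [if_pos haX]
            · rw [if_neg haX, ← h1 a (Finset.mem_union_right _ ha)]
              exact hh a haX
          · by_cases haX : a ∈ X
            · rw [if_pos haX, hcase a ha, h2 a (Finset.mem_union_left _ haX)]
            · rw [if_neg haX, h4 a (fun hm => (Finset.mem_union.1 hm).elim haX ha)]
        · push_neg at hcase
          obtain ⟨a, haY, hne⟩ := hcase
          have haX : a ∈ X := by
            by_contra haX
            exact hne ((hh a haX).trans (h3 a (fun hm => (Finset.mem_union.1 hm).elim haX haY)))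
          rw [hB.1 h g ⟨a, haY, hne⟩, hB.1 _ g' ⟨a, haY, ?_⟩]
          simp only [if_pos haX]
          rw [← h2 a (Finset.mem_union_left _ haX)]
          exact hne
      rw [hAeq, hBeq]

lemma SupportedOn.commute_of_disjoint {X Y : Finset Λ} {A B : Matrix (Λ → Fin 2) (Λ → Fin 2) ℂ}
    (hA : SupportedOn X A) (hB : SupportedOn Y B) (hd : Disjoint X Y) : A * B = B * A := by
  have hXY : ∀ a, a ∈ X → a ∉ Y := fun a ha hb => (Finset.disjoint_left.1 hd) ha hb
  ext f g
  rw [Matrix.mul_apply, Matrix.mul_apply]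
  set T : Finset (Λ → Fin 2) :=
    Finset.univ.filter (fun h => (∀ a ∉ X, h a = f a) ∧ (∀ a ∉ Y, h a = g a)) with hT
  set T' : Finset (Λ → Fin 2) :=
    Finset.univ.filter (fun h => (∀ a ∉ Y, h a = f a) ∧ (∀ a ∉ X, h a = g a)) with hT'
  have e1 : ∑ j : Λ → Fin 2, A f j * B j g = ∑ j ∈ T, A f j * B j g := by
    refine (Finset.sum_subset (Finset.subset_univ T) fun h _ hh => ?_).symm
    simp only [hT, Finset.mem_filter, Finset.mem_univ, true_and, not_and] at hh
    by_cases hc : ∀ a ∉ X, h a = f a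
    · obtain ⟨a, haY, hne⟩ := by push_neg at hh; exact hh hc
      rw [hB.1 h g ⟨a, haY, hne⟩, mul_zero]
    · obtain ⟨a, haX, hne⟩ := by push_neg at hc; exact hc
      rw [hA.1 f h ⟨a, haX, fun e => hne e.symm⟩, zero_mul]
  have e2 : ∑ j : Λ → Fin 2, B f j * A j g = ∑ j ∈ T', B f j * A j g := by
    refine (Finset.sum_subset (Finset.subset_univ T') fun h _ hh => ?_).symm
    simp only [hT', Finset.mem_filter, Finset.mem_univ, true_and, not_and] at hh
    by_cases hc : ∀ a ∉ Y, h a = f a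
    · obtain ⟨a, haX, hne⟩ := by push_neg at hh; exact hh hc
      rw [hA.1 h g ⟨a, haX, hne⟩, mul_zero]
    · obtain ⟨a, haY, hne⟩ := by push_neg at hc; exact hc
      rw [hB.1 f h ⟨a, haY, fun e => hne e.symm⟩, zero_mul]
  rw [e1, e2]
  refine Finset.sum_bij' (fun h _ => fun a => if a ∈ X then f a else if a ∈ Y then g a else h a)
    (fun h _ => fun a => if a ∈ X then g a else if a ∈ Y then f a else h a) ?_ ?_ ?_ ?_ ?_
  · intro h hh
    simp only [hT, hT', Finset.mem_filter, Finset.mem_univ, true_and] at hh ⊢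
    obtain ⟨hfX, hgY⟩ := hh
    constructor
    · intro a ha
      by_cases haX : a ∈ X
      · rw [if_pos haX]
      · rw [if_neg haX, if_neg ha]
        exact hfX a haX
    · intro a ha
      rw [if_neg ha]
      by_cases haY : a ∈ Y
      · rw [if_pos haY]
      · rw [if_neg haY]
        exact hgY a haY
  · intro h hh
    simp only [hT, hT', Finset.mem_filter, Finset.mem_univ, true_and] at hh ⊢
    obtain ⟨hfY, hgX⟩ := hh
    constructor
    · intro a ha
      rw [if_neg ha]
      by_cases haY : a ∈ Y
      · rw [if_pos haY]
      · rw [if_neg haY]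
        exact hfY a haY
    · intro a ha
      by_cases haX : a ∈ X
      · rw [if_pos haX]
      · rw [if_neg haX, if_neg ha]
        exact hgX a haX
  · intro h hh
    simp only [hT, Finset.mem_filter, Finset.mem_univ, true_and] at hh
    obtain ⟨hfX, hgY⟩ := hh
    funext a
    dsimp only
    by_cases haX : a ∈ X
    · rw [if_pos haX]
      exact (hgY a (hXY a haX)).symm
    · by_cases haY : a ∈ Y
      · simp only [if_neg haX, if_pos haY]
        exact (hfX a haX).symm
      · simp only [if_neg haX, if_neg haY]
  · intro h hh
    simp only [hT', Finset.mem_filter, Finset.mem_univ, true_and] at hh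
    obtain ⟨hfY, hgX⟩ := hh
    funext a
    dsimp only
    by_cases haX : a ∈ X
    · rw [if_pos haX]
      exact (hfY a (hXY a haX)).symm
    · by_cases haY : a ∈ Y
      · simp only [if_neg haX, if_pos haY]
        exact (hgX a haX).symm
      · simp only [if_neg haX, if_neg haY]
  · intro h hh
    simp only [hT, Finset.mem_filter, Finset.mem_univ, true_and] at hh
    obtain ⟨hfX, hgY⟩ := hh
    have hAeq : A f h = A (fun a => if a ∈ X then f a else if a ∈ Y then g a else h a) g := by
      refine hA.2 f h _ g (fun a ha => (if_pos ha).symm)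
        (fun a ha => (hgY a (hXY a ha))) (fun a ha => (hfX a ha).symm) (fun a ha => ?_)
      rw [if_neg ha]
      by_cases haY : a ∈ Y
      · rw [if_pos haY]
      · rw [if_neg haY]
        exact hgY a haY
    have hBeq : B h g = B f (fun a => if a ∈ X then f a else if a ∈ Y then g a else h a) := by
      refine hB.2 h g f _ (fun a ha => hfX a (fun hx => hXY a hx ha)) (fun a ha => ?_)
        (fun a ha => hgY a ha) (fun a ha => ?_)
      · rw [if_neg (fun hx => hXY a hx ha), if_pos ha]
      · by_cases haX : a ∈ X
        · rw [if_pos haX]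
        · rw [if_neg haX, if_neg ha, hfX a haX]
    rw [hAeq, hBeq, mul_comm]

lemma nestedComm_append {α : Type*} [Ring α] (l : List α) (A O : α) :
    nestedComm (l ++ [A]) O = nestedComm l (A * O - O * A) := by
  induction l with
  | nil => rfl
  | cons B l ih => simp [nestedComm, ih]

lemma nestedComm_sum {α : Type*} [Ring α] {ι : Type*} (l : List α) (s : Finset ι) (f : ι → α) :
    nestedComm l (∑ x ∈ s, f x) = ∑ x ∈ s, nestedComm l (f x) := by
  induction l with
  | nil => rfl
  | cons B l ih => simp [nestedComm, ih, Finset.mul_sum, Finset.sum_mul, Finset.sum_sub_distrib]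

lemma nestedComm_zero {α : Type*} [Ring α] (l : List α) : nestedComm l (0 : α) = 0 := by
  induction l with
  | nil => rfl
  | cons B l ih => simp [nestedComm, ih]

lemma key_bound (k : ℕ) (J : ℝ) (hJ : 0 < J) :
    ∀ (Hs : List (Matrix (Λ → Fin 2) (Λ → Fin 2) ℂ)),
      (∀ H ∈ Hs, IsLocalHamiltonian k J H) →
      ∀ (m : ℕ) (O : Matrix (Λ → Fin 2) (Λ → Fin 2) ℂ) (X₀ : Finset Λ),
        X₀.card ≤ m → SupportedOn X₀ O →
        ‖nestedComm Hs O‖ ≤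
          (∏ i ∈ Finset.range Hs.length, (2 * J * ((m : ℝ) + i * k))) * ‖O‖ := by
  intro Hs
  induction Hs using List.reverseRecOn with
  | nil => intro _ m O X₀ _ _; simp [nestedComm]
  | append_singleton l A ih =>
    intro hHs m O X₀ hcard hO
    have hA := hHs A (by simp)
    have hl : ∀ H ∈ l, IsLocalHamiltonian k J H :=
      fun H hH => hHs H (List.mem_append_left _ hH)
    obtain ⟨h, hsum, hsupp, hbig, hloc⟩ := hA
    -- nonnegativity of the product for length l
    set n := l.length with hn
    set Q : ℝ := ∏ i ∈ Finset.range n, (2 * J * (((m + k : ℕ) : ℝ) + i * k)) with hQ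
    have hQ0 : 0 ≤ Q := by
      refine Finset.prod_nonneg fun i _ => ?_
      positivity
    have hrw : nestedComm (l ++ [A]) O
        = ∑ X : Finset Λ, nestedComm l (h X * O - O * h X) := by
      rw [nestedComm_append, ← nestedComm_sum]
      congr 1
      rw [hsum, Finset.sum_mul, Finset.mul_sum, Finset.sum_sub_distrib]
    have hper : ∀ X : Finset Λ,
        ‖nestedComm l (h X * O - O * h X)‖ ≤
          (if (X ∩ X₀).Nonempty then ‖h X‖ else 0) * (2 * Q * ‖O‖) := by
      intro X
      by_cases hne : (X ∩ X₀).Nonempty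
      · rw [if_pos hne]
        by_cases hz : h X = 0
        · simp [hz, nestedComm_zero]
        · have hXk : X.card ≤ k := by
            by_contra hc
            exact hz (hbig X (lt_of_not_ge hc))
          have hsub : SupportedOn (X ∪ X₀) (h X * O - O * h X) := by
            refine SupportedOn.sub (SupportedOn.mul (hsupp X) hO) ?_
            exact (SupportedOn.mul hO (hsupp X)).mono (by rw [Finset.union_comm])
          have hcard' : (X ∪ X₀).card ≤ m + k := by
            calc (X ∪ X₀).card ≤ X.card + X₀.card := Finset.card_union_le _ _
            _ ≤ k + m := add_le_add hXk hcard
            _ = m + k := by ring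
          have := ih hl (m + k) (h X * O - O * h X) (X ∪ X₀) hcard' hsub
          refine this.trans ?_
          have hnorm : ‖h X * O - O * h X‖ ≤ 2 * ‖h X‖ * ‖O‖ := by
            calc ‖h X * O - O * h X‖ ≤ ‖h X * O‖ + ‖O * h X‖ := norm_sub_le _ _
            _ ≤ ‖h X‖ * ‖O‖ + ‖O‖ * ‖h X‖ := add_le_add (norm_mul_le _ _) (norm_mul_le _ _)
            _ = 2 * ‖h X‖ * ‖O‖ := by ring
          calc Q * ‖h X * O - O * h X‖ ≤ Q * (2 * ‖h X‖ * ‖O‖) :=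
              mul_le_mul_of_nonneg_left hnorm hQ0
          _ = ‖h X‖ * (2 * Q * ‖O‖) := by ring
      · rw [if_neg hne]
        have hdisj : Disjoint X X₀ := by
          rwa [Finset.disjoint_iff_inter_eq_empty, ← Finset.not_nonempty_iff_eq_empty]
        have : h X * O = O * h X := (hsupp X).commute_of_disjoint hO hdisj
        simp [this, nestedComm_zero]
    have hsumnorm : ‖nestedComm (l ++ [A]) O‖ ≤
        (∑ X : Finset Λ, (if (X ∩ X₀).Nonempty then ‖h X‖ else 0)) * (2 * Q * ‖O‖) := by
      rw [hrw, Finset.sum_mul]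
      exact (norm_sum_le _ _).trans (Finset.sum_le_sum fun X _ => hper X)
    have hJm : (∑ X : Finset Λ, (if (X ∩ X₀).Nonempty then ‖h X‖ else 0)) ≤ m * J := by
      have step1 : ∀ X : Finset Λ, (if (X ∩ X₀).Nonempty then ‖h X‖ else 0) ≤
          ∑ a ∈ X₀, (if a ∈ X then ‖h X‖ else 0) := by
        intro X
        by_cases hne : (X ∩ X₀).Nonempty
        · rw [if_pos hne]
          obtain ⟨a, ha⟩ := hne
          rw [Finset.mem_inter] at ha
          have := Finset.single_le_sum (f := fun a => if a ∈ X then ‖h X‖ else 0)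
            (fun b _ => by positivity) ha.2
          simpa only [if_pos ha.1] using this
        · rw [if_neg hne]
          exact Finset.sum_nonneg fun b _ => by positivity
      calc (∑ X : Finset Λ, (if (X ∩ X₀).Nonempty then ‖h X‖ else 0))
          ≤ ∑ X : Finset Λ, ∑ a ∈ X₀, (if a ∈ X then ‖h X‖ else 0) :=
            Finset.sum_le_sum fun X _ => step1 X
        _ = ∑ a ∈ X₀, ∑ X : Finset Λ, (if a ∈ X then ‖h X‖ else 0) := Finset.sum_comm
        _ = ∑ a ∈ X₀, ∑ X ∈ Finset.univ.filter (fun X : Finset Λ => a ∈ X), ‖h X‖ := by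
            refine Finset.sum_congr rfl fun a _ => ?_
            rw [Finset.sum_filter]
        _ ≤ ∑ a ∈ X₀, J := Finset.sum_le_sum fun a _ => hloc a
        _ = X₀.card * J := by rw [Finset.sum_const, nsmul_eq_mul]
        _ ≤ m * J := by
            have : (X₀.card : ℝ) ≤ m := Nat.cast_le.2 hcard
            exact mul_le_mul_of_nonneg_right this hJ.le
    have hfinal : ‖nestedComm (l ++ [A]) O‖ ≤ (m * J) * (2 * Q * ‖O‖) := by
      refine hsumnorm.trans (mul_le_mul_of_nonneg_right hJm ?_)
      positivity
    refine hfinal.trans (le_of_eq ?_)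
    have hlen : (l ++ [A]).length = n + 1 := by simp [hn]
    rw [hlen, Finset.prod_range_succ']
    have hprodeq : (∏ i ∈ Finset.range n, (2 * J * ((m : ℝ) + (i + 1) * k)))
        = Q := by
      rw [hQ]
      refine Finset.prod_congr rfl fun i _ => ?_
      push_cast
      ring
    push_cast
    rw [← hprodeq]
    push_cast
    ring

theorem norm_nestedComm_le (k : ℕ) (J : ℝ) (hk : 0 < k) (hJ : 0 < J)
    (Hs : List (Matrix (Λ → Fin 2) (Λ → Fin 2) ℂ))
    (hHs : ∀ H ∈ Hs, IsLocalHamiltonian k J H)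
    (O : Matrix (Λ → Fin 2) (Λ → Fin 2) ℂ) (X₀ : Finset Λ) (hX₀ : X₀.card ≤ k)
    (hO : SupportedOn X₀ O) :
    ‖nestedComm Hs O‖ ≤
      (Nat.factorial Hs.length : ℝ) * (2 * k * J) ^ Hs.length * ‖O‖ := by
  refine (key_bound k J hJ Hs hHs k O X₀ hX₀ hO).trans (le_of_eq ?_)
  congr 1
  calc ∏ i ∈ Finset.range Hs.length, (2 * J * ((k : ℝ) + i * k))
      = ∏ i ∈ Finset.range Hs.length, ((((i : ℝ) + 1)) * (2 * k * J)) := by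
        refine Finset.prod_congr rfl fun i _ => ?_
        ring
    _ = (∏ i ∈ Finset.range Hs.length, ((i : ℝ) + 1)) * (2 * k * J) ^ Hs.length := by
        rw [Finset.prod_mul_distrib, Finset.prod_const, Finset.card_range]
    _ = (Nat.factorial Hs.length : ℝ) * (2 * k * J) ^ Hs.length := by
        congr 1
        rw [← Finset.prod_range_add_one_eq_factorial]
        push_cast
        rfl
end
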